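/- Yang R-matrix: let n ≥ 1, λ ∈ ℂ, and let z, u, w ∈ ℂ be pairwise distinct. Define R(a,b) = 1 ⊗ 1 + (λ/(a−b)) P ∈ Mat_n(ℂ) ⊗ Mat_n(ℂ), where P = Σ_{i,j} E_{ij} ⊗ E_{ji}. Then R(z,u)₁₂ * R(z,w)₁₃ * R(u,w)₂₃ = R(u,w)₂₃ * R(z,w)₁₃ * R(z,u)₁₂ in Mat_n(ℂ)^{⊗3}. -/

import Mathlib

set_option synthInstance.maxHeartbeats 1000000
set_option maxHeartbeats 1000000

open scoped TensorProduct

noncomputable section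

variable (M : Type) [Ring M] [Algebra ℂ M]

/-- Embedding of `M ⊗ M` into the first two factors of `M ⊗ M ⊗ M`. -/
noncomputable def emb12 : (M ⊗[ℂ] M) →ₐ[ℂ] (M ⊗[ℂ] M) ⊗[ℂ] M :=
  Algebra.TensorProduct.includeLeft

/-- Embedding of `M ⊗ M` into the first and third factors of `M ⊗ M ⊗ M`. -/
noncomputable def emb13 : (M ⊗[ℂ] M) →ₐ[ℂ] (M ⊗[ℂ] M) ⊗[ℂ] M :=
  Algebra.TensorProduct.map Algebra.TensorProduct.includeLeft (AlgHom.id ℂ M)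

/-- Embedding of `M ⊗ M` into the last two factors of `M ⊗ M ⊗ M`. -/
noncomputable def emb23 : (M ⊗[ℂ] M) →ₐ[ℂ] (M ⊗[ℂ] M) ⊗[ℂ] M :=
  Algebra.TensorProduct.map Algebra.TensorProduct.includeRight (AlgHom.id ℂ M)

/-- The Yang–Baxter equation for `R ∈ M ⊗ M`. -/
def YBE (R : M ⊗[ℂ] M) : Prop :=
  emb12 M R * emb13 M R * emb23 M R = emb23 M R * emb13 M R * emb12 M R

/-- The matrix units `E i j`. -/
noncomputable def E (n : ℕ) (i j : Fin n) : Matrix (Fin n) (Fin n) ℂ :=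
  Matrix.single i j 1

/-- The permutation (flip) matrix `P = Σ E_{ij} ⊗ E_{ji}`. -/
noncomputable def P (n : ℕ) : Matrix (Fin n) (Fin n) ℂ ⊗[ℂ] Matrix (Fin n) (Fin n) ℂ :=
  ∑ i, ∑ j, E n i j ⊗ₜ[ℂ] E n j i

/-- The Yang R-matrix `R(a,b) = 1 ⊗ 1 + (λ/(a−b)) P`. -/
noncomputable def YangR (n : ℕ) (lam a b : ℂ) :
    Matrix (Fin n) (Fin n) ℂ ⊗[ℂ] Matrix (Fin n) (Fin n) ℂ :=
  1 + (lam / (a - b)) • P n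

/- ### Auxiliary material -/

abbrev Mn (n : ℕ) := Matrix (Fin n) (Fin n) ℂ

lemma Emul (n : ℕ) (i j k l : Fin n) : E n i j * E n k l = if j = k then E n i l else 0 := by
  unfold E
  by_cases h : j = k
  · subst h; simp [Matrix.single_mul_single_same]
  · simp [h, Matrix.single_mul_single_of_ne]

lemma Esum (n : ℕ) : ∑ i, E n i i = (1 : Mn n) := by
  ext a b
  simp only [Matrix.sum_apply, E, Matrix.single, Matrix.of_apply, Matrix.one_apply]
  by_cases h : a = b
  · subst h; simp
  · rw [if_neg h, Finset.sum_eq_zero]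
    intro i _
    exact if_neg fun hh => h (hh.1.symm.trans hh.2)

lemma Psq (n : ℕ) : P n * P n = 1 := by
  unfold P
  simp only [Finset.sum_mul, Finset.mul_sum, Algebra.TensorProduct.tmul_mul_tmul, Emul,
    TensorProduct.ite_tmul, TensorProduct.tmul_ite, Finset.sum_ite_eq, Finset.sum_ite_eq',
    Finset.mem_univ, if_true, Finset.sum_ite_irrel, Finset.sum_const_zero]
  rw [Finset.sum_comm]
  calc ∑ x1 : Fin n, ∑ x : Fin n, E n x1 x1 ⊗ₜ[ℂ] E n x x
      = ∑ x1 : Fin n, E n x1 x1 ⊗ₜ[ℂ] ∑ x : Fin n, E n x x :=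
        Finset.sum_congr rfl fun x1 _ => (TensorProduct.tmul_sum ..).symm
    _ = (∑ x1 : Fin n, E n x1 x1) ⊗ₜ[ℂ] ∑ x : Fin n, E n x x := (TensorProduct.sum_tmul ..).symm
    _ = 1 := by rw [Esum n, Algebra.TensorProduct.one_def]

lemma emb12_P (n : ℕ) :
    emb12 (Mn n) (P n) = ∑ i, ∑ j, (E n i j ⊗ₜ[ℂ] E n j i) ⊗ₜ[ℂ] (1 : Mn n) := by
  simp [emb12, P, TensorProduct.sum_tmul]

lemma emb13_P (n : ℕ) :
    emb13 (Mn n) (P n) = ∑ i, ∑ j, (E n i j ⊗ₜ[ℂ] (1 : Mn n)) ⊗ₜ[ℂ] E n j i := by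
  simp [emb13, P, map_sum]

lemma emb23_P (n : ℕ) :
    emb23 (Mn n) (P n) = ∑ i, ∑ j, ((1 : Mn n) ⊗ₜ[ℂ] E n i j) ⊗ₜ[ℂ] E n j i := by
  simp [emb23, P, map_sum]

lemma sum3_reindex {n : ℕ} {β : Type} [AddCommMonoid β] (f : Fin n → Fin n → Fin n → β)
    (e : (Fin n × Fin n × Fin n) ≃ (Fin n × Fin n × Fin n)) :
    ∑ a, ∑ b, ∑ c, f a b c
      = ∑ a, ∑ b, ∑ c, f (e (a,b,c)).1 (e (a,b,c)).2.1 (e (a,b,c)).2.2 := by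
  have h : ∀ g : Fin n → Fin n → Fin n → β,
      ∑ p : Fin n × Fin n × Fin n, g p.1 p.2.1 p.2.2 = ∑ a, ∑ b, ∑ c, g a b c := by
    intro g; rw [Fintype.sum_prod_type]
    exact Finset.sum_congr rfl fun a _ => Fintype.sum_prod_type _
  rw [← h, ← h]
  exact (Fintype.sum_equiv e _ _ (fun p => rfl)).symm

noncomputable def AA (n : ℕ) : (Mn n ⊗[ℂ] Mn n) ⊗[ℂ] Mn n :=
  ∑ a, ∑ b, ∑ c, (E n a b ⊗ₜ[ℂ] E n c a) ⊗ₜ[ℂ] E n b c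

noncomputable def BB (n : ℕ) : (Mn n ⊗[ℂ] Mn n) ⊗[ℂ] Mn n :=
  ∑ a, ∑ b, ∑ c, (E n a c ⊗ₜ[ℂ] E n c b) ⊗ₜ[ℂ] E n b a

lemma p12_13 (n : ℕ) : emb12 (Mn n) (P n) * emb13 (Mn n) (P n) = AA n := by
  rw [emb12_P, emb13_P]
  simp only [Finset.sum_mul, Finset.mul_sum, Algebra.TensorProduct.tmul_mul_tmul, one_mul,
    mul_one, Emul, TensorProduct.ite_tmul, TensorProduct.tmul_ite, Finset.sum_ite_eq,
    Finset.sum_ite_eq', Finset.mem_univ, if_true, Finset.sum_ite_irrel, Finset.sum_const_zero]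
  unfold AA
  exact (sum3_reindex (fun a b c => (E n a b ⊗ₜ[ℂ] E n c a) ⊗ₜ[ℂ] E n b c)
    ⟨fun p => (p.2.2, p.2.1, p.1), fun p => (p.2.2, p.2.1, p.1),
    fun p => rfl, fun p => rfl⟩).symm

lemma p23_12 (n : ℕ) : emb23 (Mn n) (P n) * emb12 (Mn n) (P n) = AA n := by
  rw [emb23_P, emb12_P]
  simp only [Finset.sum_mul, Finset.mul_sum, Algebra.TensorProduct.tmul_mul_tmul, one_mul,
    mul_one, Emul, TensorProduct.ite_tmul, TensorProduct.tmul_ite, Finset.sum_ite_eq,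
    Finset.sum_ite_eq', Finset.mem_univ, if_true, Finset.sum_ite_irrel, Finset.sum_const_zero]
  rfl

lemma p13_23 (n : ℕ) : emb13 (Mn n) (P n) * emb23 (Mn n) (P n) = AA n := by
  rw [emb13_P, emb23_P]
  simp only [Finset.sum_mul, Finset.mul_sum, Algebra.TensorProduct.tmul_mul_tmul, one_mul,
    mul_one, Emul, TensorProduct.ite_tmul, TensorProduct.tmul_ite, Finset.sum_ite_eq,
    Finset.sum_ite_eq', Finset.mem_univ, if_true, Finset.sum_ite_irrel, Finset.sum_const_zero]
  unfold AA
  exact (sum3_reindex (fun a b c => (E n a b ⊗ₜ[ℂ] E n c a) ⊗ₜ[ℂ] E n b c)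
    ⟨fun p => (p.2.1, p.2.2, p.1), fun p => (p.2.2, p.1, p.2.1),
    fun p => rfl, fun p => rfl⟩).symm

lemma p12_23 (n : ℕ) : emb12 (Mn n) (P n) * emb23 (Mn n) (P n) = BB n := by
  rw [emb12_P, emb23_P]
  simp only [Finset.sum_mul, Finset.mul_sum, Algebra.TensorProduct.tmul_mul_tmul, one_mul,
    mul_one, Emul, TensorProduct.ite_tmul, TensorProduct.tmul_ite, Finset.sum_ite_eq,
    Finset.sum_ite_eq', Finset.mem_univ, if_true, Finset.sum_ite_irrel, Finset.sum_const_zero]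
  rfl

lemma p13_12 (n : ℕ) : emb13 (Mn n) (P n) * emb12 (Mn n) (P n) = BB n := by
  rw [emb13_P, emb12_P]
  simp only [Finset.sum_mul, Finset.mul_sum, Algebra.TensorProduct.tmul_mul_tmul, one_mul,
    mul_one, Emul, TensorProduct.ite_tmul, TensorProduct.tmul_ite, Finset.sum_ite_eq,
    Finset.sum_ite_eq', Finset.mem_univ, if_true, Finset.sum_ite_irrel, Finset.sum_const_zero]
  unfold BB
  exact (sum3_reindex (fun a b c => (E n a c ⊗ₜ[ℂ] E n c b) ⊗ₜ[ℂ] E n b a)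
    ⟨fun p => (p.2.2, p.1, p.2.1), fun p => (p.2.1, p.2.2, p.1),
    fun p => rfl, fun p => rfl⟩).symm

lemma p23_13 (n : ℕ) : emb23 (Mn n) (P n) * emb13 (Mn n) (P n) = BB n := by
  rw [emb23_P, emb13_P]
  simp only [Finset.sum_mul, Finset.mul_sum, Algebra.TensorProduct.tmul_mul_tmul, one_mul,
    mul_one, Emul, TensorProduct.ite_tmul, TensorProduct.tmul_ite, Finset.sum_ite_eq,
    Finset.sum_ite_eq', Finset.mem_univ, if_true, Finset.sum_ite_irrel, Finset.sum_const_zero]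
  unfold BB
  exact (sum3_reindex (fun a b c => (E n a c ⊗ₜ[ℂ] E n c b) ⊗ₜ[ℂ] E n b a)
    ⟨fun p => (p.1, p.2.2, p.2.1), fun p => (p.1, p.2.2, p.2.1),
    fun p => rfl, fun p => rfl⟩).symm

set_option linter.unreachableTactic false in
lemma abstract_ybe {R : Type*} [Ring R] [Algebra ℂ R] (a b c : ℂ)
    (p12 p13 p23 A B : R)
    (h1 : p12 * p13 = A) (h2 : p23 * p12 = A) (h3 : p13 * p23 = A)
    (h4 : p12 * p23 = B) (h5 : p13 * p12 = B) (h6 : p23 * p13 = B)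
    (trip : p12 * p13 * p23 = p23 * p13 * p12)
    (key : a * b + b * c = c * a) :
    (1 + a • p12) * (1 + b • p13) * (1 + c • p23)
      = (1 + c • p23) * (1 + b • p13) * (1 + a • p12) := by
  simp only [mul_add, add_mul, mul_one, one_mul, smul_mul_assoc, mul_smul_comm, smul_smul]
  rw [h1, h4, h3, h6, h2, h5]
  have tAB : A * p23 = B * p12 := by rw [← h1, ← h6]; exact trip
  rw [tAB]
  match_scalars <;> first | ring1 | linear_combination key | linear_combination (-1 : ℂ) * key | linear_combination (2 : ℂ) * key | linear_combination (-2 : ℂ) * key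

/-- The Yang R-matrix satisfies the Yang–Baxter equation with spectral
parameters. -/
theorem stmt19 (n : ℕ) (hn : 1 ≤ n) (lam : ℂ) (z u w : ℂ)
    (hzu : z ≠ u) (hzw : z ≠ w) (huw : u ≠ w) :
    emb12 (Matrix (Fin n) (Fin n) ℂ) (YangR n lam z u)
        * emb13 (Matrix (Fin n) (Fin n) ℂ) (YangR n lam z w)
        * emb23 (Matrix (Fin n) (Fin n) ℂ) (YangR n lam u w)
      = emb23 (Matrix (Fin n) (Fin n) ℂ) (YangR n lam u w)
        * emb13 (Matrix (Fin n) (Fin n) ℂ) (YangR n lam z w)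
        * emb12 (Matrix (Fin n) (Fin n) ℂ) (YangR n lam z u) := by
  set a := lam / (z - u) with ha
  set b := lam / (z - w) with hb
  set c := lam / (u - w) with hc
  have e12 : emb12 (Matrix (Fin n) (Fin n) ℂ) (YangR n lam z u)
      = 1 + a • emb12 (Mn n) (P n) := by
    rw [YangR, map_add, map_one, map_smul]
  have e13 : emb13 (Matrix (Fin n) (Fin n) ℂ) (YangR n lam z w)
      = 1 + b • emb13 (Mn n) (P n) := by
    rw [YangR, map_add, map_one, map_smul]
  have e23 : emb23 (Matrix (Fin n) (Fin n) ℂ) (YangR n lam u w)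
      = 1 + c • emb23 (Mn n) (P n) := by
    rw [YangR, map_add, map_one, map_smul]
  rw [e12, e13, e23]
  have sq12 : emb12 (Mn n) (P n) * emb12 (Mn n) (P n) = 1 := by
    rw [← map_mul, Psq, map_one]
  have sq23 : emb23 (Mn n) (P n) * emb23 (Mn n) (P n) = 1 := by
    rw [← map_mul, Psq, map_one]
  have key : a * b + b * c = c * a := by
    rw [ha, hb, hc]
    have h1' : z - u ≠ 0 := sub_ne_zero.mpr hzu
    have h2' : z - w ≠ 0 := sub_ne_zero.mpr hzw
    have h3' : u - w ≠ 0 := sub_ne_zero.mpr huw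
    field_simp
    ring
  have trip : emb12 (Mn n) (P n) * emb13 (Mn n) (P n) * emb23 (Mn n) (P n)
      = emb23 (Mn n) (P n) * emb13 (Mn n) (P n) * emb12 (Mn n) (P n) := by
    rw [p12_13 n, ← p13_23 n, mul_assoc, sq23, mul_one,
      p23_13 n, ← p13_12 n, mul_assoc, sq12, mul_one]
  exact abstract_ybe a b c _ _ _ (AA n) (BB n) (p12_13 n) (p23_12 n) (p13_23 n)
    (p12_23 n) (p13_12 n) (p23_13 n) trip key
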